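/- For natural numbers k, ℓ, the number of pairs (P₁,P₂) of non-intersecting upright lattice paths, with P₁ from (0,1) to (ℓ,k+1) and P₂ from (1,0) to (ℓ+1,k), equals the Narayana number N(k+ℓ+1,k+1), i.e., (k+ℓ+1) times this number equals C(k+ℓ+1,k)·C(k+ℓ+1,k+1). -/

import Mathlib

/-- An upright lattice path with `m` unit steps `(1,0)` or `(0,1)`, from `s` to `t`,
recorded as the sequence of its `m+1` visited points. -/
def IsPathN (m : ℕ) (s t : ℕ × ℕ) (p : Fin (m + 1) → ℕ × ℕ) : Prop :=
  p 0 = s ∧ p (Fin.last m) = t ∧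
    ∀ i : Fin m, p i.succ = p i.castSucc + (1, 0) ∨ p i.succ = p i.castSucc + (0, 1)

/-- Two paths are non-intersecting if they share no point. -/
def Noninter {m : ℕ} (p q : Fin (m + 1) → ℕ × ℕ) : Prop := ∀ i j, p i ≠ q j

open Finset

section Count
variable {m : ℕ} {s t : ℕ × ℕ}

/-- set of up-steps of a path -/
def stepsOf (p : Fin (m+1) → ℕ × ℕ) : Finset (Fin m) :=
  univ.filter (fun i => p i.succ = p i.castSucc + (0,1))

/-- number of elements of `S` below `n` -/
def upc (S : Finset (Fin m)) (n : ℕ) : ℕ := (S.filter (fun j : Fin m => (j:ℕ) < n)).card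

lemma upc_zero (S : Finset (Fin m)) : upc S 0 = 0 := by
  simp [upc]

lemma upc_le (S : Finset (Fin m)) (n : ℕ) : upc S n ≤ n := by
  classical
  have : ∀ j ∈ S.filter (fun j : Fin m => (j:ℕ) < n), (j:ℕ) ∈ Finset.range n := by
    intro j hj
    simp only [mem_filter] at hj
    simpa using hj.2
  calc upc S n ≤ (Finset.range n).card := Finset.card_le_card_of_injOn _ this
        (fun a _ b _ h => Fin.val_injective h)
    _ = n := by simp

lemma upc_succ (S : Finset (Fin m)) (n : ℕ) (h : n < m) :
    upc S (n+1) = upc S n + (if (⟨n, h⟩ : Fin m) ∈ S then 1 else 0) := by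
  classical
  have : S.filter (fun j : Fin m => (j:ℕ) < n+1)
      = S.filter (fun j : Fin m => (j:ℕ) < n) ∪ S.filter (fun j : Fin m => j = (⟨n, h⟩ : Fin m)) := by
    rw [← Finset.filter_or]
    apply Finset.filter_congr
    intro j _
    simp only [Nat.lt_succ_iff_lt_or_eq, Fin.ext_iff]
  rw [upc, this, Finset.card_union_of_disjoint, Finset.filter_eq']
  · split <;> simp [upc]
  · rw [Finset.disjoint_filter]
    intro j _ hj hj'
    rw [hj'] at hj
    simp at hj

lemma upc_top (S : Finset (Fin m)) : upc S m = S.card := by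
  rw [upc, Finset.filter_true_of_mem]
  intro j _; exact j.isLt

/-- path determined by a set of up-steps -/
def pOf (s : ℕ × ℕ) (S : Finset (Fin m)) (i : Fin (m+1)) : ℕ × ℕ :=
  (s.1 + ((i:ℕ) - upc S (i:ℕ)), s.2 + upc S (i:ℕ))

lemma pOf_zero (s : ℕ × ℕ) (S : Finset (Fin m)) : pOf s S 0 = s := by
  simp [pOf, upc_zero]

lemma pOf_last (s : ℕ × ℕ) (S : Finset (Fin m)) :
    pOf s S (Fin.last m) = (s.1 + (m - S.card), s.2 + S.card) := by
  simp [pOf, upc_top]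

lemma pOf_step (s : ℕ × ℕ) (S : Finset (Fin m)) (i : Fin m) :
    pOf s S i.succ = pOf s S i.castSucc + (if i ∈ S then (0,1) else (1,0)) := by
  have hv : (i.succ : ℕ) = (i : ℕ) + 1 := rfl
  have hc : (i.castSucc : ℕ) = (i : ℕ) := rfl
  have hstep := upc_succ S (i : ℕ) i.isLt
  have : (⟨(i:ℕ), i.isLt⟩ : Fin m) = i := by simp
  rw [this] at hstep
  have hle := upc_le S (i : ℕ)
  by_cases hmem : i ∈ S <;>
    simp only [pOf, hv, hc, hstep, hmem, if_true, if_false, Prod.mk_add_mk,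
      Prod.mk.injEq] <;> omega
end Count

section Count2
variable {m : ℕ} {s t : ℕ × ℕ}

lemma isPathN_pOf (S : Finset (Fin m)) (h2 : s.2 + S.card = t.2)
    (h1 : s.1 + (m - S.card) = t.1) : IsPathN m s t (pOf s S) := by
  refine ⟨pOf_zero s S, ?_, ?_⟩
  · rw [pOf_last]
    exact Prod.ext h1 h2
  · intro i
    rw [pOf_step]
    by_cases hmem : i ∈ S <;> simp [hmem]

lemma path_eq_pOf {p : Fin (m+1) → ℕ × ℕ} (hp : IsPathN m s t p) (i : Fin (m+1)) :
    p i = pOf s (stepsOf p) i := by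
  induction i using Fin.induction with
  | zero => rw [hp.1, pOf_zero]
  | succ i ih =>
      rw [pOf_step]
      by_cases hmem : i ∈ stepsOf p
      · have : p i.succ = p i.castSucc + (0,1) := by
          simpa [stepsOf] using hmem
        rw [this, ih, if_pos hmem]
      · have hne : ¬ (p i.succ = p i.castSucc + (0,1)) := by
          simpa [stepsOf] using hmem
        have : p i.succ = p i.castSucc + (1,0) := (hp.2.2 i).resolve_right hne
        rw [this, ih, if_neg hmem]

lemma stepsOf_pOf (S : Finset (Fin m)) : stepsOf (pOf s S) = S := by
  ext i
  simp only [stepsOf, Finset.mem_filter, Finset.mem_univ, true_and]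
  rw [pOf_step]
  by_cases hmem : i ∈ S
  · simp [hmem]
  · simp only [hmem, if_false]
    simp only [iff_false]
    intro h
    have := congrArg Prod.fst h
    simp at this

/-- paths correspond to their sets of up-steps -/
noncomputable def pathEquiv (m : ℕ) (s t : ℕ × ℕ) :
    {p : Fin (m+1) → ℕ × ℕ // IsPathN m s t p} ≃
      {S : Finset (Fin m) // s.2 + S.card = t.2 ∧ s.1 + (m - S.card) = t.1} where
  toFun p := ⟨stepsOf p.1, by
    have h := path_eq_pOf p.2 (Fin.last m)
    rw [p.2.2.1, pOf_last] at h
    exact ⟨(congrArg Prod.snd h).symm, (congrArg Prod.fst h).symm⟩⟩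
  invFun S := ⟨pOf s S.1, isPathN_pOf S.1 S.2.1 S.2.2⟩
  left_inv p := by
    apply Subtype.ext
    exact (funext (path_eq_pOf p.2)).symm
  right_inv S := Subtype.ext (stepsOf_pOf S.1)

instance pathFinite (m : ℕ) (s t : ℕ × ℕ) :
    Finite {p : Fin (m+1) → ℕ × ℕ // IsPathN m s t p} :=
  Finite.of_equiv _ (pathEquiv m s t).symm

lemma card_paths (m : ℕ) (s t : ℕ × ℕ) (d : ℕ) (h2 : s.2 + d = t.2)
    (h1 : s.1 + (m - d) = t.1) (hd : d ≤ m) (hm : s.1 + s.2 + m = t.1 + t.2) :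
    Nat.card {p : Fin (m+1) → ℕ × ℕ // IsPathN m s t p} = m.choose d := by
  rw [Nat.card_congr (pathEquiv m s t)]
  have : ∀ S : Finset (Fin m), (s.2 + S.card = t.2 ∧ s.1 + (m - S.card) = t.1)
      ↔ S.card = d := by
    intro S
    constructor
    · intro h; omega
    · intro h; omega
  rw [Nat.card_congr (Equiv.subtypeEquivRight this), Nat.card_eq_fintype_card]
  simpa using Fintype.card_finset_len (α := Fin m) d

lemma card_paths_empty (m : ℕ) (s t : ℕ × ℕ)
    (h : ∀ d : ℕ, d ≤ m → ¬(s.2 + d = t.2 ∧ s.1 + (m - d) = t.1)) :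
    Nat.card {p : Fin (m+1) → ℕ × ℕ // IsPathN m s t p} = 0 := by
  rw [Nat.card_congr (pathEquiv m s t)]
  rw [Nat.card_eq_zero]
  left
  rw [isEmpty_subtype]
  intro S
  exact h S.card (by simpa using Finset.card_le_card (Finset.subset_univ S)) 
end Count2

section Swap
variable {m : ℕ}

def Cross {m : ℕ} (p q : Fin (m + 1) → ℕ × ℕ) : Prop := ∃ i, p i = q i

lemma path_sum {s t : ℕ × ℕ} {p : Fin (m+1) → ℕ × ℕ} (hp : IsPathN m s t p)
    (i : Fin (m+1)) : (p i).1 + (p i).2 = s.1 + s.2 + (i : ℕ) := by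
  induction i using Fin.induction with
  | zero => rw [hp.1]; rfl
  | succ i ih =>
      have hv : (i.succ : ℕ) = (i.castSucc : ℕ) + 1 := rfl
      rcases hp.2.2 i with h | h <;> rw [h, hv] <;>
        simp only [Prod.fst_add, Prod.snd_add] <;> omega

lemma noninter_iff {a1 b1 a2 b2 : ℕ × ℕ} {p q : Fin (m+1) → ℕ × ℕ}
    (hp : IsPathN m a1 b1 p) (hq : IsPathN m a2 b2 q) (h : a1.1 + a1.2 = a2.1 + a2.2) :
    Noninter p q ↔ ¬ Cross p q := by
  constructor
  · rintro hN ⟨i, hi⟩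
    exact hN i i hi
  · intro hC i j hij
    apply hC
    have h1 := path_sum hp i
    have h2 := path_sum hq j
    rw [hij] at h1
    have : (i : ℕ) = (j : ℕ) := by omega
    exact ⟨i, by rw [hij, Fin.ext this]⟩

noncomputable def tsw (p q : Fin (m+1) → ℕ × ℕ) :
    (Fin (m+1) → ℕ × ℕ) × (Fin (m+1) → ℕ × ℕ) := by
  classical
  exact (fun i => if ∃ j, i ≤ j ∧ p j = q j then p i else q i,
   fun i => if ∃ j, i ≤ j ∧ p j = q j then q i else p i)

lemma tsw_snd (p q : Fin (m+1) → ℕ × ℕ) : (tsw p q).2 = (tsw q p).1 := by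
  funext i
  simp only [tsw]
  exact if_congr (exists_congr fun j => and_congr_right fun _ => eq_comm) rfl rfl

/-- first component of the tail swap is a path from a1 to b2 -/
lemma tsw_isPath {a1 b1 a2 b2 : ℕ × ℕ} {p q : Fin (m+1) → ℕ × ℕ}
    (hp : IsPathN m a1 b1 p) (hq : IsPathN m a2 b2 q) (hc : Cross p q) :
    IsPathN m a1 b2 (tsw p q).1 := by
  classical
  obtain ⟨i0, hi0⟩ := hc
  have hR0 : ∃ j, (0 : Fin (m+1)) ≤ j ∧ p j = q j := ⟨i0, Fin.zero_le _, hi0⟩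
  refine ⟨?_, ?_, ?_⟩
  · simp only [tsw, if_pos hR0]
    exact hp.1
  · simp only [tsw]
    by_cases hR : ∃ j, Fin.last m ≤ j ∧ p j = q j
    · obtain ⟨j, hj, hj2⟩ := hR
      have : j = Fin.last m := le_antisymm (Fin.le_last j) hj
      rw [if_pos ⟨j, hj, hj2⟩]
      rw [this] at hj2
      rw [hj2, hq.2.1]
    · rw [if_neg hR]
      exact hq.2.1
  · intro i
    simp only [tsw]
    by_cases hs : ∃ j, i.succ ≤ j ∧ p j = q j
    · obtain ⟨j, hj, hj2⟩ := hs
      have hcs : ∃ j, i.castSucc ≤ j ∧ p j = q j :=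
        ⟨j, le_trans (le_of_lt (Fin.castSucc_lt_succ (i := i))) hj, hj2⟩
      rw [if_pos ⟨j, hj, hj2⟩, if_pos hcs]
      exact hp.2.2 i
    · rw [if_neg hs]
      by_cases hcs : ∃ j, i.castSucc ≤ j ∧ p j = q j
      · obtain ⟨j, hj, hj2⟩ := hcs
        have hje : j = i.castSucc := by
          rcases lt_or_eq_of_le hj with h | h
          · exact absurd ⟨j, (Fin.castSucc_lt_iff_succ_le).1 h, hj2⟩ hs
          · exact h.symm
        subst hje
        rw [if_pos ⟨i.castSucc, le_refl _, hj2⟩, hj2]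
        exact hq.2.2 i
      · rw [if_neg hcs]
        exact hq.2.2 i

lemma tsw_cross {p q : Fin (m+1) → ℕ × ℕ} (hc : Cross p q) :
    Cross (tsw p q).1 (tsw p q).2 := by
  obtain ⟨j, hj⟩ := hc
  refine ⟨j, ?_⟩
  simp only [tsw]
  by_cases hR : ∃ j', j ≤ j' ∧ p j' = q j'
  · rw [if_pos hR, if_pos hR]; exact hj
  · rw [if_neg hR, if_neg hR]; exact hj.symm

lemma tsw_pointwise {p q : Fin (m+1) → ℕ × ℕ} (j : Fin (m+1)) :
    (tsw p q).1 j = (tsw p q).2 j ↔ p j = q j := by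
  simp only [tsw]
  by_cases hR : ∃ j', j ≤ j' ∧ p j' = q j'
  · rw [if_pos hR, if_pos hR]
  · rw [if_neg hR, if_neg hR]
    refine iff_of_false ?_ ?_
    · intro h; exact hR ⟨j, le_refl j, h.symm⟩
    · intro h; exact hR ⟨j, le_refl j, h⟩

lemma tsw_invol (p q : Fin (m+1) → ℕ × ℕ) :
    tsw (tsw p q).1 (tsw p q).2 = (p, q) := by
  have hcong : ∀ i : Fin (m+1),
      (∃ j, i ≤ j ∧ (tsw p q).1 j = (tsw p q).2 j) ↔ (∃ j, i ≤ j ∧ p j = q j) :=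
    fun i => exists_congr fun j => and_congr_right fun _ => tsw_pointwise j
  have h1 : (tsw (tsw p q).1 (tsw p q).2).1 = p := by
    funext i
    show (if ∃ j, i ≤ j ∧ (tsw p q).1 j = (tsw p q).2 j then (tsw p q).1 i
      else (tsw p q).2 i) = p i
    rw [if_congr (hcong i) rfl rfl]
    by_cases hR : ∃ j, i ≤ j ∧ p j = q j
    · rw [if_pos hR]
      simp only [tsw]
      rw [if_pos hR]
    · rw [if_neg hR]
      simp only [tsw]
      rw [if_neg hR]
  have h2 : (tsw (tsw p q).1 (tsw p q).2).2 = q := by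
    funext i
    show (if ∃ j, i ≤ j ∧ (tsw p q).1 j = (tsw p q).2 j then (tsw p q).2 i
      else (tsw p q).1 i) = q i
    rw [if_congr (hcong i) rfl rfl]
    by_cases hR : ∃ j, i ≤ j ∧ p j = q j
    · rw [if_pos hR]
      simp only [tsw]
      rw [if_pos hR]
    · rw [if_neg hR]
      simp only [tsw]
      rw [if_neg hR]
  exact Prod.ext h1 h2

lemma must_cross {a1 b1 a2 b2 : ℕ × ℕ} {p q : Fin (m+1) → ℕ × ℕ}
    (hp : IsPathN m a1 b1 p) (hq : IsPathN m a2 b2 q)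
    (hsum : a1.1 + a1.2 = a2.1 + a2.2) (h0 : a1.1 < a2.1) (h1 : b2.1 < b1.1) :
    Cross p q := by
  classical
  set F := Finset.univ.filter (fun i : Fin (m+1) => (q i).1 ≤ (p i).1) with hF
  have hlast : Fin.last m ∈ F := by
    simp only [hF, Finset.mem_filter, Finset.mem_univ, true_and]
    rw [hp.2.1, hq.2.1]
    omega
  have hFne : F.Nonempty := ⟨_, hlast⟩
  set i0 := F.min' hFne with hi0def
  have hi0 : (q i0).1 ≤ (p i0).1 := by
    have := F.min'_mem hFne
    simp only [hF, Finset.mem_filter] at this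
    exact this.2
  have hi0ne : (i0 : ℕ) ≠ 0 := by
    intro h
    have h0' : i0 = 0 := Fin.ext h
    rw [h0', hp.1, hq.1] at hi0
    omega
  have hn : 0 < (i0 : ℕ) := Nat.pos_of_ne_zero hi0ne
  have hnm : (i0 : ℕ) ≤ m := Fin.is_le i0
  set j : Fin m := ⟨(i0 : ℕ) - 1, by omega⟩ with hj
  have hjs : j.succ = i0 := by
    apply Fin.ext
    simp [hj]
    omega
  have hjc : (j.castSucc : ℕ) = (i0 : ℕ) - 1 := rfl
  have hprev : ¬ ((q j.castSucc).1 ≤ (p j.castSucc).1) := by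
    intro hle
    have hmem : j.castSucc ∈ F := by
      simp only [hF, Finset.mem_filter, Finset.mem_univ, true_and]; exact hle
    have := F.min'_le _ hmem
    rw [← hi0def] at this
    have : (i0 : ℕ) ≤ (j.castSucc : ℕ) := this
    omega
  push_neg at hprev
  have hpstep : (p j.succ).1 ≤ (p j.castSucc).1 + 1 := by
    rcases hp.2.2 j with h | h <;> rw [h] <;> simp [Prod.fst_add]
  have hqstep : (q j.castSucc).1 ≤ (q j.succ).1 := by
    rcases hq.2.2 j with h | h <;> rw [h] <;> simp [Prod.fst_add]
  rw [hjs] at hpstep hqstep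
  have hxeq : (p i0).1 = (q i0).1 := by omega
  have hs1 := path_sum hp i0
  have hs2 := path_sum hq i0
  refine ⟨i0, Prod.ext hxeq ?_⟩
  omega

end Swap

lemma nar_id (k ℓ : ℕ) :
    (k+ℓ+1) * ((k+ℓ).choose k * (k+ℓ).choose k)
      = (k+ℓ+1).choose k * (k+ℓ+1).choose (k+1)
        + (k+ℓ+1) * ((k+ℓ).choose (ℓ+1) * (k+ℓ).choose (k+1)) := by
  have hc1 : (k+ℓ).choose ℓ = (k+ℓ).choose k := by
    have h := Nat.choose_symm (Nat.le_add_right k ℓ)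
    rwa [Nat.add_sub_cancel_left] at h
  have e1 : (k+ℓ+1).choose (k+1) * (k+1) = (k+ℓ+1) * (k+ℓ).choose k :=
    (Nat.add_one_mul_choose_eq (k+ℓ) k).symm
  have e2a : (k+ℓ+1).choose k = (k+ℓ+1).choose (ℓ+1) := by
    have h := Nat.choose_symm (show k ≤ k+ℓ+1 by omega)
    rw [show k+ℓ+1-k = ℓ+1 from by omega] at h
    exact h.symm
  have e2 : (k+ℓ+1).choose (ℓ+1) * (ℓ+1) = (k+ℓ+1) * (k+ℓ).choose k := by
    rw [← hc1]
    exact (Nat.add_one_mul_choose_eq (k+ℓ) ℓ).symm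
  have e3 : (k+ℓ).choose (ℓ+1) * (ℓ+1) = (k+ℓ).choose k * k := by
    rw [Nat.choose_succ_right_eq, hc1]
    congr 1
    omega
  have e4 : (k+ℓ).choose (k+1) * (k+1) = (k+ℓ).choose k * ℓ := by
    rw [Nat.choose_succ_right_eq]
    congr 1
    omega
  apply Nat.eq_of_mul_eq_mul_left (show 0 < (k+1)*(ℓ+1) by positivity)
  rw [e2a]
  zify at e1 e2 e3 e4 ⊢
  linear_combination (-(((k+ℓ+1).choose (k+1) : ℤ) * ((k:ℤ)+1))) * e2
    + (-(((k:ℤ)+ℓ+1) * ((k+ℓ).choose k : ℤ))) * e1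
    + (-(((k:ℤ)+ℓ+1) * ((k+ℓ).choose (k+1) : ℤ) * ((k:ℤ)+1))) * e3
    + (-(((k:ℤ)+ℓ+1) * ((k+ℓ).choose k : ℤ) * (k:ℤ))) * e4

section Assemble
variable {m : ℕ}

lemma cross_symm {p q : Fin (m+1) → ℕ × ℕ} (h : Cross p q) : Cross q p := by
  obtain ⟨i, hi⟩ := h
  exact ⟨i, hi.symm⟩

noncomputable def crossEquiv (m : ℕ) (a1 b1 a2 b2 : ℕ × ℕ) :
    {pr : (Fin (m+1) → ℕ×ℕ) × (Fin (m+1) → ℕ×ℕ) //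
      (IsPathN m a1 b1 pr.1 ∧ IsPathN m a2 b2 pr.2) ∧ Cross pr.1 pr.2} ≃
    {pr : (Fin (m+1) → ℕ×ℕ) × (Fin (m+1) → ℕ×ℕ) //
      (IsPathN m a1 b2 pr.1 ∧ IsPathN m a2 b1 pr.2) ∧ Cross pr.1 pr.2} where
  toFun x := ⟨tsw x.1.1 x.1.2,
    ⟨⟨tsw_isPath x.2.1.1 x.2.1.2 x.2.2,
      by rw [tsw_snd]; exact tsw_isPath x.2.1.2 x.2.1.1 (cross_symm x.2.2)⟩,
      tsw_cross x.2.2⟩⟩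
  invFun y := ⟨tsw y.1.1 y.1.2,
    ⟨⟨tsw_isPath y.2.1.1 y.2.1.2 y.2.2,
      by rw [tsw_snd]; exact tsw_isPath y.2.1.2 y.2.1.1 (cross_symm y.2.2)⟩,
      tsw_cross y.2.2⟩⟩
  left_inv x := Subtype.ext ((tsw_invol x.1.1 x.1.2).trans (Prod.mk.eta))
  right_inv y := Subtype.ext ((tsw_invol y.1.1 y.1.2).trans (Prod.mk.eta))

lemma cardN3 (k ℓ : ℕ) :
    Nat.card {p : Fin (k+ℓ+1) → ℕ×ℕ // IsPathN (k+ℓ) (0,1) (ℓ+1,k) p}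
      = (k+ℓ).choose (ℓ+1) := by
  cases k with
  | zero =>
      rw [card_paths_empty]
      · rw [Nat.choose_eq_zero_of_lt (by omega)]
      · intro d hd
        rintro ⟨h1, h2⟩
        omega
  | succ k' =>
      rw [card_paths (k'+1+ℓ) (0,1) (ℓ+1,k'+1) k' (by omega) (by simp; omega)
        (by omega) (by simp; omega)]
      have h := Nat.choose_symm (show k' ≤ k'+1+ℓ by omega)
      rw [show k'+1+ℓ-k' = ℓ+1 from by omega] at h
      exact h.symm

lemma cardN4 (k ℓ : ℕ) :
    Nat.card {p : Fin (k+ℓ+1) → ℕ×ℕ // IsPathN (k+ℓ) (1,0) (ℓ,k+1) p}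
      = (k+ℓ).choose (k+1) := by
  cases ℓ with
  | zero =>
      rw [Nat.choose_eq_zero_of_lt (by omega)]
      exact card_paths_empty (k+0) (1,0) (0,k+1) (by
        intro d hd
        rintro ⟨h1, h2⟩
        simp at h1 h2)
  | succ ℓ' =>
      rw [card_paths (k+(ℓ'+1)) (1,0) (ℓ'+1,k+1) (k+1) (by omega) (by simp; omega)
        (by omega) (by simp; omega)]

end Assemble

theorem noninter_pairs_narayana (k ℓ : ℕ) :
    (k + ℓ + 1) *
        Nat.card {pr : (Fin (k + ℓ + 1) → ℕ × ℕ) × (Fin (k + ℓ + 1) → ℕ × ℕ) //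
          IsPathN (k + ℓ) (0, 1) (ℓ, k + 1) pr.1 ∧
          IsPathN (k + ℓ) (1, 0) (ℓ + 1, k) pr.2 ∧ Noninter pr.1 pr.2}
      = (k + ℓ + 1).choose k * (k + ℓ + 1).choose (k + 1) := by
  classical
  set m := k + ℓ with hm
  -- path counts
  have hN1 : Nat.card {p : Fin (m+1) → ℕ×ℕ // IsPathN m (0,1) (ℓ,k+1) p}
      = m.choose k :=
    card_paths m (0,1) (ℓ,k+1) k (by omega) (by simp; omega) (by omega) (by simp; omega)
  have hN2 : Nat.card {p : Fin (m+1) → ℕ×ℕ // IsPathN m (1,0) (ℓ+1,k) p}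
      = m.choose k :=
    card_paths m (1,0) (ℓ+1,k) k (by omega) (by simp; omega) (by omega) (by simp; omega)
  have hN3 := cardN3 k ℓ
  have hN4 := cardN4 k ℓ
  -- finiteness
  haveI : Finite {pr : (Fin (m+1) → ℕ×ℕ) × (Fin (m+1) → ℕ×ℕ) //
      IsPathN m (0,1) (ℓ,k+1) pr.1 ∧ IsPathN m (1,0) (ℓ+1,k) pr.2} :=
    Finite.of_equiv _ (Equiv.subtypeProdEquivProd (p := IsPathN m (0,1) (ℓ,k+1))
      (q := IsPathN m (1,0) (ℓ+1,k))).symm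
  -- cardinality of all pairs
  have hA : Nat.card {pr : (Fin (m+1) → ℕ×ℕ) × (Fin (m+1) → ℕ×ℕ) //
      IsPathN m (0,1) (ℓ,k+1) pr.1 ∧ IsPathN m (1,0) (ℓ+1,k) pr.2}
      = m.choose k * m.choose k := by
    rw [Nat.card_congr (Equiv.subtypeProdEquivProd), Nat.card_prod, hN1, hN2]
  -- split into crossing and non-crossing
  have hsplit : Nat.card {pr : (Fin (m+1) → ℕ×ℕ) × (Fin (m+1) → ℕ×ℕ) //
      IsPathN m (0,1) (ℓ,k+1) pr.1 ∧ IsPathN m (1,0) (ℓ+1,k) pr.2}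
      = Nat.card {pr : (Fin (m+1) → ℕ×ℕ) × (Fin (m+1) → ℕ×ℕ) //
          (IsPathN m (0,1) (ℓ,k+1) pr.1 ∧ IsPathN m (1,0) (ℓ+1,k) pr.2) ∧
            Cross pr.1 pr.2}
        + Nat.card {pr : (Fin (m+1) → ℕ×ℕ) × (Fin (m+1) → ℕ×ℕ) //
          (IsPathN m (0,1) (ℓ,k+1) pr.1 ∧ IsPathN m (1,0) (ℓ+1,k) pr.2) ∧
            ¬ Cross pr.1 pr.2} := by
    rw [← Nat.card_congr (Equiv.sumCompl
      (fun x : {pr : (Fin (m+1) → ℕ×ℕ) × (Fin (m+1) → ℕ×ℕ) //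
        IsPathN m (0,1) (ℓ,k+1) pr.1 ∧ IsPathN m (1,0) (ℓ+1,k) pr.2} =>
        Cross x.1.1 x.1.2))]
    rw [Nat.card_sum]
    congr 1
    · exact Nat.card_congr (Equiv.subtypeSubtypeEquivSubtypeInter
        (fun pr : (Fin (m+1) → ℕ×ℕ) × (Fin (m+1) → ℕ×ℕ) =>
          IsPathN m (0,1) (ℓ,k+1) pr.1 ∧ IsPathN m (1,0) (ℓ+1,k) pr.2)
        (fun pr => Cross pr.1 pr.2))
    · exact Nat.card_congr (Equiv.subtypeSubtypeEquivSubtypeInter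
        (fun pr : (Fin (m+1) → ℕ×ℕ) × (Fin (m+1) → ℕ×ℕ) =>
          IsPathN m (0,1) (ℓ,k+1) pr.1 ∧ IsPathN m (1,0) (ℓ+1,k) pr.2)
        (fun pr => ¬ Cross pr.1 pr.2))
  -- crossing pairs are equinumerous with all swapped pairs
  have hcross : Nat.card {pr : (Fin (m+1) → ℕ×ℕ) × (Fin (m+1) → ℕ×ℕ) //
      (IsPathN m (0,1) (ℓ,k+1) pr.1 ∧ IsPathN m (1,0) (ℓ+1,k) pr.2) ∧
        Cross pr.1 pr.2} = m.choose (ℓ+1) * m.choose (k+1) := by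
    rw [Nat.card_congr (crossEquiv m (0,1) (ℓ,k+1) (1,0) (ℓ+1,k))]
    have hiff : ∀ pr : (Fin (m+1) → ℕ×ℕ) × (Fin (m+1) → ℕ×ℕ),
        ((IsPathN m (0,1) (ℓ+1,k) pr.1 ∧ IsPathN m (1,0) (ℓ,k+1) pr.2) ∧
          Cross pr.1 pr.2)
        ↔ (IsPathN m (0,1) (ℓ+1,k) pr.1 ∧ IsPathN m (1,0) (ℓ,k+1) pr.2) := by
      intro pr
      constructor
      · exact fun h => h.1
      · intro h
        exact ⟨h, must_cross h.1 h.2 (by norm_num) (by norm_num) (by norm_num)⟩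
    rw [Nat.card_congr (Equiv.subtypeEquivRight hiff),
      Nat.card_congr (Equiv.subtypeProdEquivProd), Nat.card_prod, hN3, hN4]
  -- the target set is the non-crossing pairs
  have htgt : Nat.card {pr : (Fin (m + 1) → ℕ × ℕ) × (Fin (m + 1) → ℕ × ℕ) //
          IsPathN m (0, 1) (ℓ, k + 1) pr.1 ∧
          IsPathN m (1, 0) (ℓ + 1, k) pr.2 ∧ Noninter pr.1 pr.2}
      = Nat.card {pr : (Fin (m+1) → ℕ×ℕ) × (Fin (m+1) → ℕ×ℕ) //
          (IsPathN m (0,1) (ℓ,k+1) pr.1 ∧ IsPathN m (1,0) (ℓ+1,k) pr.2) ∧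
            ¬ Cross pr.1 pr.2} := by
    apply Nat.card_congr
    apply Equiv.subtypeEquivRight
    intro pr
    constructor
    · rintro ⟨h1, h2, h3⟩
      exact ⟨⟨h1, h2⟩, (noninter_iff h1 h2 (by norm_num)).1 h3⟩
    · rintro ⟨⟨h1, h2⟩, h3⟩
      exact ⟨h1, h2, (noninter_iff h1 h2 (by norm_num)).2 h3⟩
  have hkey : Nat.card {pr : (Fin (m + 1) → ℕ × ℕ) × (Fin (m + 1) → ℕ × ℕ) //
          IsPathN m (0, 1) (ℓ, k + 1) pr.1 ∧
          IsPathN m (1, 0) (ℓ + 1, k) pr.2 ∧ Noninter pr.1 pr.2}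
      + m.choose (ℓ+1) * m.choose (k+1) = m.choose k * m.choose k := by
    rw [htgt, ← hcross, ← hA, hsplit]
    omega
  have hid := nar_id k ℓ
  apply Nat.add_right_cancel
    (m := (m+1) * (m.choose (ℓ+1) * m.choose (k+1)))
  rw [← Nat.mul_add, hkey]
  exact hid
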